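/- Let k be a field and X a type; in F := FreeAlgebra k (X ⊕ X), with plain generators x̄ := ι(Sum.inl x) and dotted generators ẋ := ι(Sum.inr x), let φ : F → F be the unique algebra homomorphism with φ(x̄) = x̄ and φ(ẋ) = x̄ for all x ∈ X. Then the smallest k-submodule W of F that contains all dotted generators ẋ and is closed under the three tri-algebra operations (for all a, b ∈ W: φ(a)·b ∈ W, a·φ(b) ∈ W, a·b ∈ W) coincides, as a submodule of F, with the two-sided ideal of F generated by the set {ẋ : x ∈ X}. -/
import Mathlib


/-- In the free associative algebra on `X ⊕ X`, the sub-tri-algebra generated by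
the dotted generators (the smallest submodule containing them closed under the three tri-algebra
operations) coincides with the two-sided ideal generated by the dotted generators. -/
theorem trialgebra_closure_eq_twoSidedIdeal (k : Type*) [Field k] (X : Type*)
    (φ : FreeAlgebra k (X ⊕ X) →ₐ[k] FreeAlgebra k (X ⊕ X))
    (hφl : ∀ x : X, φ (FreeAlgebra.ι k (Sum.inl x)) = FreeAlgebra.ι k (Sum.inl x))
    (hφr : ∀ x : X, φ (FreeAlgebra.ι k (Sum.inr x)) = FreeAlgebra.ι k (Sum.inl x)) :
    ((sInf {W : Submodule k (FreeAlgebra k (X ⊕ X)) |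
        (∀ x : X, FreeAlgebra.ι k (Sum.inr x) ∈ W) ∧
        ∀ a b : FreeAlgebra k (X ⊕ X), a ∈ W → b ∈ W →
          φ a * b ∈ W ∧ a * φ b ∈ W ∧ a * b ∈ W} : Submodule k (FreeAlgebra k (X ⊕ X))) :
        Set (FreeAlgebra k (X ⊕ X))) =
      ((TwoSidedIdeal.span (Set.range fun x : X => FreeAlgebra.ι k (Sum.inr x : X ⊕ X))) :
        Set (FreeAlgebra k (X ⊕ X))) := by
  set F := FreeAlgebra k (X ⊕ X)
  set S : Set (Submodule k F) := {W : Submodule k F |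
      (∀ x : X, FreeAlgebra.ι k (Sum.inr x) ∈ W) ∧
      ∀ a b : F, a ∈ W → b ∈ W → φ a * b ∈ W ∧ a * φ b ∈ W ∧ a * b ∈ W} with hS
  set W : Submodule k F := sInf S with hW
  set s : Set F := Set.range fun x : X => FreeAlgebra.ι k (Sum.inr x : X ⊕ X) with hs
  -- W itself satisfies the closure conditions
  have hWgen : ∀ x : X, FreeAlgebra.ι k (Sum.inr x) ∈ W := by
    intro x
    rw [hW, Submodule.mem_sInf]
    exact fun V hV => hV.1 x
  have hWcl : ∀ a b : F, a ∈ W → b ∈ W → φ a * b ∈ W ∧ a * φ b ∈ W ∧ a * b ∈ W := by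
    intro a b ha hb
    rw [hW, Submodule.mem_sInf] at ha hb
    refine ⟨?_, ?_, ?_⟩ <;>
      (rw [hW, Submodule.mem_sInf]; intro V hV)
    · exact (hV.2 a b (ha V hV) (hb V hV)).1
    · exact (hV.2 a b (ha V hV) (hb V hV)).2.1
    · exact (hV.2 a b (ha V hV) (hb V hV)).2.2
  -- W is closed under left multiplication by arbitrary elements
  have hmul_left : ∀ (c : F), ∀ a ∈ W, c * a ∈ W := by
    intro c
    induction c using FreeAlgebra.induction with
    | grade0 r =>
        intro a ha
        rw [Algebra.algebraMap_eq_smul_one, smul_mul_assoc, one_mul]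
        exact W.smul_mem r ha
    | grade1 x =>
        intro a ha
        cases x with
        | inl y =>
            have := (hWcl _ a (hWgen y) ha).1
            rwa [hφr y] at this
        | inr y => exact (hWcl _ a (hWgen y) ha).2.2
    | mul c d hc hd =>
        intro a ha
        rw [mul_assoc]
        exact hc _ (hd _ ha)
    | add c d hc hd =>
        intro a ha
        rw [add_mul]
        exact W.add_mem (hc _ ha) (hd _ ha)
  have hmul_right : ∀ (c : F), ∀ a ∈ W, a * c ∈ W := by
    intro c
    induction c using FreeAlgebra.induction with
    | grade0 r =>
        intro a ha
        rw [Algebra.algebraMap_eq_smul_one, mul_smul_comm, mul_one]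
        exact W.smul_mem r ha
    | grade1 x =>
        intro a ha
        cases x with
        | inl y =>
            have := (hWcl a _ ha (hWgen y)).2.1
            rwa [hφr y] at this
        | inr y => exact (hWcl a _ ha (hWgen y)).2.2
    | mul c d hc hd =>
        intro a ha
        rw [← mul_assoc]
        exact hd _ (hc _ ha)
    | add c d hc hd =>
        intro a ha
        rw [mul_add]
        exact W.add_mem (hc _ ha) (hd _ ha)
  -- W as a two-sided ideal
  let J : TwoSidedIdeal F := TwoSidedIdeal.mk' (W : Set F) W.zero_mem
    (fun hx hy => W.add_mem hx hy) (fun hx => W.neg_mem hx)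
    (fun {x y} hy => hmul_left x y hy) (fun {x y} hx => hmul_right y x hx)
  apply Set.Subset.antisymm
  · -- W ⊆ span : span's carrier is a submodule in S
    let V : Submodule k F := {
      carrier := (TwoSidedIdeal.span s : Set F)
      add_mem' := fun hx hy => (TwoSidedIdeal.span s).add_mem hx hy
      zero_mem' := (TwoSidedIdeal.span s).zero_mem
      smul_mem' := fun r x hx => by
        have : r • x = algebraMap k F r * x := by
          rw [Algebra.algebraMap_eq_smul_one, smul_mul_assoc, one_mul]
        rw [this]
        exact (TwoSidedIdeal.span s).mul_mem_left _ _ hx }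
    have hVS : V ∈ S := by
      constructor
      · intro x
        exact TwoSidedIdeal.subset_span ⟨x, rfl⟩
      · intro a b ha hb
        exact ⟨(TwoSidedIdeal.span s).mul_mem_left _ _ hb,
          (TwoSidedIdeal.span s).mul_mem_right _ _ ha,
          (TwoSidedIdeal.span s).mul_mem_right _ _ ha⟩
    intro x hx
    exact (Submodule.mem_sInf.mp hx) V hVS
  · -- span ⊆ W
    intro x hx
    have : x ∈ J := by
      refine TwoSidedIdeal.mem_span_iff.mp hx J ?_
      rintro _ ⟨y, rfl⟩
      show _ ∈ J
      rw [show J = TwoSidedIdeal.mk' _ _ _ _ _ _ from rfl, TwoSidedIdeal.mem_mk']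
      exact hWgen y
    rw [show J = TwoSidedIdeal.mk' _ _ _ _ _ _ from rfl, TwoSidedIdeal.mem_mk'] at this
    exact this
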